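/- Let n ∈ ℝ³ with n₁² + n₂² + n₃² = 1, let a ∈ ℝ³ and φ ∈ ℝ. Then, for 2×2 complex matrices, exp(−i(φ/2)(n·σ)) * (a·σ) * exp(i(φ/2)(n·σ)) = b·σ, where b := cos φ · a − sin φ · (a ×ᵥ n) + (1 − cos φ)(a·n)·n, ×ᵥ is the standard cross product, and a·n the Euclidean inner product. In other words, conjugation by the unitary exp(−i(φ/2)n·σ) implements the rotation by angle φ about the axis n. -/

import Mathlib

open Matrix

/-- The Pauli matrices. -/
noncomputable def pauli1 : Matrix (Fin 2) (Fin 2) ℂ := !![0, 1; 1, 0]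
noncomputable def pauli2 : Matrix (Fin 2) (Fin 2) ℂ := !![0, -Complex.I; Complex.I, 0]
noncomputable def pauli3 : Matrix (Fin 2) (Fin 2) ℂ := !![1, 0; 0, -1]

/-- For `v ∈ ℝ³`, the matrix `v·σ = v₁σ₁ + v₂σ₂ + v₃σ₃`. -/
noncomputable def pauliDot (v : Fin 3 → ℝ) : Matrix (Fin 2) (Fin 2) ℂ :=
  (v 0 : ℂ) • pauli1 + (v 1 : ℂ) • pauli2 + (v 2 : ℂ) • pauli3

set_option maxHeartbeats 1600000

section NormAux

open NormedSpace

attribute [local instance] Matrix.linftyOpNormedRing Matrix.linftyOpNormedAlgebra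

private theorem exp_idem (P : Matrix (Fin 2) (Fin 2) ℂ) (hP : P * P = P) (c : ℂ) :
    exp (c • P) = 1 + (Complex.exp c - 1) • P := by
  have hpow : ∀ k : ℕ, P ^ (k + 1) = P := by
    intro k; induction k with
    | zero => simp
    | succ k ih => rw [pow_succ, ih, hP]
  have hsum : Summable (fun k : ℕ => ((Nat.factorial k : ℂ)⁻¹) • (c • P) ^ k) :=
    expSeries_summable' (𝕂 := ℂ) (c • P)
  have hsc : Summable (fun k : ℕ => c ^ k / (Nat.factorial k)) :=
    expSeries_div_summable c
  have hsc1 : Summable (fun k : ℕ => c ^ (k+1) / (Nat.factorial (k+1))) :=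
    (summable_nat_add_iff 1).mpr hsc
  have hexpc : Complex.exp c = ∑' k : ℕ, c ^ k / (Nat.factorial k) :=
    Complex.exp_eq_exp_ℂ ▸ congrFun (exp_eq_tsum_div (𝔸 := ℂ)) c
  simp only [exp_eq_tsum ℂ]
  rw [Summable.tsum_eq_zero_add hsum]
  have : (fun k : ℕ => ((Nat.factorial (k+1) : ℂ)⁻¹) • (c • P) ^ (k+1))
      = fun k : ℕ => (c ^ (k+1) / (Nat.factorial (k+1))) • P := by
    funext k
    rw [smul_pow, hpow, smul_smul]
    ring_nf
  rw [this, Summable.tsum_smul_const hsc1, hexpc, Summable.tsum_eq_zero_add hsc]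
  simp

private theorem exp_sq_one' (N : Matrix (Fin 2) (Fin 2) ℂ) (hN : N * N = 1) (c : ℂ) :
    exp (c • N) = ((Complex.exp c + Complex.exp (-c)) / 2) • 1 +
      ((Complex.exp c - Complex.exp (-c)) / 2) • N := by
  set P := (2⁻¹ : ℂ) • (1 + N) with hPdef
  set Q := (2⁻¹ : ℂ) • (1 - N) with hQdef
  have hP : P * P = P := by
    simp only [hPdef, smul_mul_assoc, mul_smul_comm, mul_add, add_mul, hN, smul_smul,
      one_mul, mul_one]
    module
  have hQ : Q * Q = Q := by
    simp only [hQdef, smul_mul_assoc, mul_smul_comm, mul_sub, sub_mul, hN, smul_smul,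
      one_mul, mul_one]
    module
  have hPQ : P * Q = Q * P := by
    simp only [hPdef, hQdef, smul_mul_assoc, mul_smul_comm, mul_sub, sub_mul, mul_add, add_mul,
      hN, smul_smul, one_mul, mul_one]
    module
  have hsplit : c • N = c • P + (-c) • Q := by
    simp only [hPdef, hQdef, smul_smul, smul_add, smul_sub]
    module
  have hcomm : Commute (c • P) ((-c) • Q) :=
    Commute.smul_right (Commute.smul_left hPQ c) (-c)
  rw [hsplit, show exp (c • P + (-c) • Q) = exp (c • P) * exp ((-c) • Q) from
    NormedSpace.exp_add_of_commute hcomm, exp_idem _ hP, exp_idem _ hQ]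
  simp only [hPdef, hQdef, mul_add, add_mul, smul_mul_assoc, mul_smul_comm, mul_sub, sub_mul,
    hN, smul_smul, one_mul, mul_one]
  module

end NormAux

private theorem exp_sq_one (N : Matrix (Fin 2) (Fin 2) ℂ) (hN : N * N = 1) (c : ℂ) :
    NormedSpace.exp (c • N) = ((Complex.exp c + Complex.exp (-c)) / 2) • 1 +
      ((Complex.exp c - Complex.exp (-c)) / 2) • N :=
  exp_sq_one' N hN c

private lemma pauliDot_mul (v w : Fin 3 → ℝ) :
    pauliDot v * pauliDot w =
      ((v ⬝ᵥ w : ℝ) : ℂ) • 1 + Complex.I • pauliDot (v ⨯₃ w) := by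
  ext i j
  fin_cases i <;> fin_cases j <;>
    simp [pauliDot, pauli1, pauli2, pauli3, Matrix.mul_apply, Fin.sum_univ_succ,
      dotProduct, crossProduct, Matrix.one_apply, Complex.ext_iff] <;>
    constructor <;> ring

private lemma pauliDot_smul (r : ℝ) (v : Fin 3 → ℝ) :
    pauliDot (r • v) = (r : ℂ) • pauliDot v := by
  simp only [pauliDot, Pi.smul_apply, smul_eq_mul, Complex.ofReal_mul, smul_add, smul_smul]

private lemma pauliDot_add (v w : Fin 3 → ℝ) : pauliDot (v + w) = pauliDot v + pauliDot w := by
  simp only [pauliDot, Pi.add_apply, Complex.ofReal_add, add_smul]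
  module

private lemma pauliDot_sub (v w : Fin 3 → ℝ) : pauliDot (v - w) = pauliDot v - pauliDot w := by
  simp only [pauliDot, Pi.sub_apply, Complex.ofReal_sub, sub_smul]
  module

private lemma pauliDot_neg (v : Fin 3 → ℝ) : pauliDot (-v) = -pauliDot v := by
  simp only [pauliDot, Pi.neg_apply, Complex.ofReal_neg, neg_smul]
  module

private lemma cross_dot_self' (a n : Fin 3 → ℝ) : (a ⨯₃ n) ⬝ᵥ n = 0 := by
  simp [crossProduct, dotProduct, Fin.sum_univ_succ]
  ring

private lemma cross_cross' (a n : Fin 3 → ℝ) :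
    (a ⨯₃ n) ⨯₃ n = (a ⬝ᵥ n) • n - (n ⬝ᵥ n) • a := by
  funext i
  fin_cases i <;>
    simp [crossProduct, dotProduct, Fin.sum_univ_succ] <;> ring

private lemma conj_formula (A N X : Matrix (Fin 2) (Fin 2) ℂ) (c s d : ℂ)
    (hAN : A * N = d • 1 + Complex.I • X)
    (hNA : N * A = d • 1 - Complex.I • X)
    (hXN : X * N = (Complex.I * d) • N - Complex.I • A) :
    (c • 1 - (Complex.I * s) • N) * A * (c • 1 + (Complex.I * s) • N) =
      (c ^ 2 - s ^ 2) • A - (2 * s * c) • X + (2 * s ^ 2 * d) • N := by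
  have hI : Complex.I ^ 2 = -1 := Complex.I_sq
  simp only [sub_mul, add_mul, mul_add, mul_sub, smul_mul_assoc, mul_smul_comm, one_mul, mul_one,
    hNA]
  simp only [sub_mul, add_mul, mul_add, mul_sub, smul_mul_assoc, mul_smul_comm, one_mul, mul_one,
    hAN, hXN]
  match_scalars
  · linear_combination (s ^ 2 * (1 - Complex.I ^ 2)) * hI
  · ring
  · linear_combination (2 * c * s) * hI
  · linear_combination (s ^ 2 * d * (Complex.I ^ 2 - 2)) * hI

/-- Conjugation by `exp(−i(φ/2)(n·σ))` (with `|n| = 1`) implements the rotation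
by angle `φ` about the axis `n`:
`exp(−i(φ/2)(n·σ)) (a·σ) exp(i(φ/2)(n·σ)) = b·σ` where
`b = cos φ · a − sin φ · (a ×ᵥ n) + (1 − cos φ)(a·n)·n`. -/
theorem stmt_15 (n a : Fin 3 → ℝ) (hn : n 0 ^ 2 + n 1 ^ 2 + n 2 ^ 2 = 1) (φ : ℝ) :
    NormedSpace.exp ((-(Complex.I * (φ / 2))) • pauliDot n) * pauliDot a *
      NormedSpace.exp ((Complex.I * (φ / 2)) • pauliDot n) =
    pauliDot (Real.cos φ • a - Real.sin φ • (a ⨯₃ n) +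
      ((1 - Real.cos φ) * (a ⬝ᵥ n)) • n) := by
  have hnn : n ⬝ᵥ n = 1 := by
    have : n ⬝ᵥ n = n 0 ^ 2 + n 1 ^ 2 + n 2 ^ 2 := by
      simp [dotProduct, Fin.sum_univ_three]; ring
    rw [this, hn]
  have hNN : pauliDot n * pauliDot n = 1 := by
    rw [pauliDot_mul, hnn, cross_self]
    simp [pauliDot]
  have hAN : pauliDot a * pauliDot n =
      ((a ⬝ᵥ n : ℝ) : ℂ) • 1 + Complex.I • pauliDot (a ⨯₃ n) := pauliDot_mul a n
  have hNA : pauliDot n * pauliDot a =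
      ((a ⬝ᵥ n : ℝ) : ℂ) • 1 - Complex.I • pauliDot (a ⨯₃ n) := by
    rw [pauliDot_mul, dotProduct_comm, ← cross_anticomm, pauliDot_neg]
    module
  have hXN : pauliDot (a ⨯₃ n) * pauliDot n =
      (Complex.I * ((a ⬝ᵥ n : ℝ) : ℂ)) • pauliDot n - Complex.I • pauliDot a := by
    rw [pauliDot_mul, cross_dot_self', cross_cross', hnn, pauliDot_sub, pauliDot_smul,
      pauliDot_smul]
    push_cast
    match_scalars <;> ring
  have hexp1 : Complex.exp (-(Complex.I * ((φ : ℂ) / 2))) =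
      ((Real.cos (φ / 2) : ℝ) : ℂ) - ((Real.sin (φ / 2) : ℝ) : ℂ) * Complex.I := by
    rw [show -(Complex.I * ((φ : ℂ) / 2)) = ((-(φ / 2) : ℝ) : ℂ) * Complex.I by
      push_cast; ring, Complex.exp_mul_I, ← Complex.ofReal_cos, ← Complex.ofReal_sin]
    all_goals (push_cast [Real.cos_neg, Real.sin_neg]; try ring)
  have hexp2 : Complex.exp (Complex.I * ((φ : ℂ) / 2)) =
      ((Real.cos (φ / 2) : ℝ) : ℂ) + ((Real.sin (φ / 2) : ℝ) : ℂ) * Complex.I := by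
    rw [show Complex.I * ((φ : ℂ) / 2) = (((φ / 2) : ℝ) : ℂ) * Complex.I by
      push_cast; ring, Complex.exp_mul_I, ← Complex.ofReal_cos, ← Complex.ofReal_sin]
    all_goals (push_cast; try ring)
  have hU1 : NormedSpace.exp ((-(Complex.I * ((φ : ℂ) / 2))) • pauliDot n) =
      ((Real.cos (φ / 2) : ℝ) : ℂ) • 1 -
        (Complex.I * ((Real.sin (φ / 2) : ℝ) : ℂ)) • pauliDot n := by
    rw [exp_sq_one _ hNN, neg_neg, hexp1, hexp2]
    match_scalars <;> ring
  have hU2 : NormedSpace.exp ((Complex.I * ((φ : ℂ) / 2)) • pauliDot n) =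
      ((Real.cos (φ / 2) : ℝ) : ℂ) • 1 +
        (Complex.I * ((Real.sin (φ / 2) : ℝ) : ℂ)) • pauliDot n := by
    rw [exp_sq_one _ hNN, hexp1, hexp2]
    match_scalars <;> ring
  rw [hU1, hU2, conj_formula _ _ _ _ _ _ hAN hNA hXN,
    pauliDot_add, pauliDot_sub, pauliDot_smul, pauliDot_smul, pauliDot_smul]
  have h2c : Real.cos φ = Real.cos (φ / 2) ^ 2 - Real.sin (φ / 2) ^ 2 := by
    rw [← Real.cos_two_mul']; ring_nf
  have h2s : Real.sin φ = 2 * Real.sin (φ / 2) * Real.cos (φ / 2) := by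
    rw [← Real.sin_two_mul]; ring_nf
  have hpy : Real.sin (φ / 2) ^ 2 + Real.cos (φ / 2) ^ 2 = 1 := Real.sin_sq_add_cos_sq _
  rw [h2c, h2s]
  match_scalars <;> push_cast
  · ring
  · ring
  · linear_combination (((a ⬝ᵥ n : ℝ) : ℂ)) * Complex.sin_sq_add_cos_sq ((φ : ℂ) / 2)
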